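/- For every δ with 0 < δ < 1/8, ∫_δ^{1/2} ∫_{1/2}^{1-δ} 1/(ts + (1-t)(1-s)) dμ(t) dμ(s) ≥ (1/π²)·ln(1/(8δ)), where dμ(t) = dt/(π√(t(1-t))). -/

import Mathlib

open MeasureTheory
set_option maxHeartbeats 1000000

theorem rectangle_energy_lower (δ : ℝ) (h0 : 0 < δ) (h1 : δ < 1/8) :
    (1 / Real.pi ^ 2) * Real.log (1/(8*δ)) ≤
      ∫ t in δ..(1/2 : ℝ), ∫ s in (1/2 : ℝ)..(1 - δ),
        (1 / (t * s + (1 - t) * (1 - s))) *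
          (1 / (Real.pi * Real.sqrt (t * (1 - t)))) *
          (1 / (Real.pi * Real.sqrt (s * (1 - s)))) := by
  have hπ : (0:ℝ) < Real.pi := Real.pi_pos
  have hπ2 : (0:ℝ) < Real.pi ^ 2 := by positivity
  set F : ℝ → ℝ → ℝ := fun t s =>
    (1 / (t * s + (1 - t) * (1 - s))) *
      (1 / (Real.pi * Real.sqrt (t * (1 - t)))) *
      (1 / (Real.pi * Real.sqrt (s * (1 - s)))) with hF
  suffices hmain : (1 / Real.pi ^ 2) * Real.log (1/(8*δ)) ≤
      ∫ t in δ..(1/2 : ℝ), ∫ s in (1/2 : ℝ)..(1 - δ), F t s by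
    simpa only [hF] using hmain
  set r : ℝ := Real.sqrt (δ/2) with hr
  have hrpos : 0 < r := Real.sqrt_pos.2 (by linarith)
  -- globally continuous modification, equal to F on the rectangle
  set Ft : ℝ → ℝ → ℝ := fun t s =>
    (1 / max (t * s + (1 - t) * (1 - s)) (δ/2)) *
      (1 / (Real.pi * max (Real.sqrt (t * (1 - t))) r)) *
      (1 / (Real.pi * max (Real.sqrt (s * (1 - s))) r)) with hFt
  have hle : (1:ℝ)/2 ≤ 1 - δ := by linarith
  have hδle : δ ≤ (1:ℝ)/2 := by linarith
  -- Ft = F on the rectangle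
  have hmax1 : ∀ t ∈ Set.Icc δ (1/2:ℝ), ∀ s ∈ Set.Icc (1/2:ℝ) (1-δ),
      max (t * s + (1 - t) * (1 - s)) (δ/2) = t * s + (1 - t) * (1 - s) := by
    intro t ht s hs
    obtain ⟨ht1, ht2⟩ := ht; obtain ⟨hs1, hs2⟩ := hs
    exact max_eq_left (by nlinarith)
  have hmax2 : ∀ t ∈ Set.Icc δ (1/2:ℝ),
      max (Real.sqrt (t * (1 - t))) r = Real.sqrt (t * (1 - t)) := by
    intro t ht
    obtain ⟨ht1, ht2⟩ := ht
    exact max_eq_left (Real.sqrt_le_sqrt (by nlinarith))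
  have hmax3 : ∀ s ∈ Set.Icc (1/2:ℝ) (1-δ),
      max (Real.sqrt (s * (1 - s))) r = Real.sqrt (s * (1 - s)) := by
    intro s hs
    obtain ⟨hs1, hs2⟩ := hs
    exact max_eq_left (Real.sqrt_le_sqrt (by nlinarith))
  have hFtF : ∀ t ∈ Set.Icc δ (1/2:ℝ), ∀ s ∈ Set.Icc (1/2:ℝ) (1-δ), Ft t s = F t s := by
    intro t ht s hs
    simp only [hFt, hF, hmax1 t ht s hs, hmax2 t ht, hmax3 s hs]
  -- Ft is jointly continuous
  have hFtcont : Continuous (Function.uncurry Ft) := by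
    show Continuous fun p : ℝ × ℝ => Ft p.1 p.2
    simp only [hFt]
    apply Continuous.mul
    apply Continuous.mul
    · apply continuous_const.div (by fun_prop)
      intro p
      exact (lt_of_lt_of_le (by linarith : (0:ℝ) < δ/2) (le_max_right _ _)).ne'
    · apply continuous_const.div (by fun_prop)
      intro p
      exact (mul_pos hπ (lt_of_lt_of_le hrpos (le_max_right _ _))).ne'
    · apply continuous_const.div (by fun_prop)
      intro p
      exact (mul_pos hπ (lt_of_lt_of_le hrpos (le_max_right _ _))).ne'
  -- the explicit lower bound function
  set φ : ℝ → ℝ := fun t => 2/(Real.pi^2*(t+δ)) - 2/(Real.pi^2*(t+1/2)) with hφ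
  -- inner bound
  have hinner : ∀ t ∈ Set.Icc δ (1/2:ℝ), φ t ≤ ∫ s in (1/2:ℝ)..(1-δ), F t s := by
    intro t ht
    obtain ⟨ht1, ht2⟩ := ht
    have htpos : 0 < t := lt_of_lt_of_le h0 ht1
    -- continuity of F t on the interval
    have hFcont : ContinuousOn (F t) (Set.Icc (1/2:ℝ) (1-δ)) := by
      apply ContinuousOn.mul
      apply ContinuousOn.mul
      · apply ContinuousOn.div continuousOn_const (by fun_prop)
        intro s hs
        obtain ⟨hs1, hs2⟩ := hs
        exact ne_of_gt (by nlinarith)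
      · apply ContinuousOn.div continuousOn_const (by fun_prop)
        intro s hs
        have h' : 0 < Real.sqrt (t * (1-t)) := Real.sqrt_pos.2 (by nlinarith)
        exact ne_of_gt (mul_pos hπ h')
      · apply ContinuousOn.div continuousOn_const (by fun_prop)
        intro s hs
        obtain ⟨hs1, hs2⟩ := hs
        have h' : 0 < Real.sqrt (s * (1-s)) := Real.sqrt_pos.2 (by nlinarith)
        exact ne_of_gt (mul_pos hπ h')
    have hFint : IntervalIntegrable (F t) volume (1/2) (1-δ) :=
      (hFcont.mono (by rw [Set.uIcc_of_le hle])).intervalIntegrable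
    set G : ℝ → ℝ := fun s => 2/(Real.pi^2 * (t+1-s)^2) with hG
    have hGcont : ContinuousOn G (Set.uIcc (1/2:ℝ) (1-δ)) := by
      rw [Set.uIcc_of_le hle]
      apply ContinuousOn.div continuousOn_const (by fun_prop)
      intro s hs
      obtain ⟨hs1, hs2⟩ := hs
      have h' : 0 < t + 1 - s := by linarith
      exact ne_of_gt (mul_pos hπ2 (by positivity))
    have hGint : IntervalIntegrable G volume (1/2) (1-δ) := hGcont.intervalIntegrable
    -- pointwise bound G ≤ F t
    have hpt : ∀ s ∈ Set.Icc (1/2:ℝ) (1-δ), G s ≤ F t s := by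
      intro s hs
      obtain ⟨hs1, hs2⟩ := hs
      have hs0 : 0 < s := by linarith
      have h1s : 0 < 1 - s := by linarith
      have hDpos : 0 < t * s + (1 - t) * (1 - s) := by nlinarith
      have hst : 0 < t + 1 - s := by linarith
      have hsq1 : Real.sqrt (t * (1-t)) ≤ Real.sqrt t := by
        apply Real.sqrt_le_sqrt; nlinarith
      have hsq2 : Real.sqrt (s * (1-s)) ≤ Real.sqrt (1-s) := by
        apply Real.sqrt_le_sqrt; nlinarith
      have hsqpos1 : 0 < Real.sqrt (t * (1-t)) := Real.sqrt_pos.2 (by nlinarith)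
      have hsqpos2 : 0 < Real.sqrt (s * (1-s)) := Real.sqrt_pos.2 (by nlinarith)
      have hprod : Real.sqrt t * Real.sqrt (1-s) ≤ (t + 1 - s)/2 := by
        rw [← Real.sqrt_mul htpos.le]
        have : t * (1-s) ≤ ((t+1-s)/2)^2 := by nlinarith [sq_nonneg (t - (1-s))]
        calc Real.sqrt (t * (1-s)) ≤ Real.sqrt (((t+1-s)/2)^2) := Real.sqrt_le_sqrt this
          _ = (t+1-s)/2 := Real.sqrt_sq (by linarith)
      have hDle : t * s + (1 - t) * (1 - s) ≤ t + 1 - s := by nlinarith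
      have key : (t * s + (1 - t) * (1 - s)) *
          ((Real.pi * Real.sqrt (t * (1-t))) * (Real.pi * Real.sqrt (s * (1-s))))
          ≤ Real.pi^2 * (t+1-s)^2 / 2 := by
        have hw : (Real.pi * Real.sqrt (t * (1-t))) * (Real.pi * Real.sqrt (s * (1-s)))
            ≤ Real.pi^2 * ((t+1-s)/2) := by
          have h2 : Real.sqrt (t*(1-t)) * Real.sqrt (s*(1-s)) ≤
              Real.sqrt t * Real.sqrt (1-s) := by
            apply mul_le_mul hsq1 hsq2 hsqpos2.le (Real.sqrt_nonneg _)
          calc (Real.pi * Real.sqrt (t * (1-t))) * (Real.pi * Real.sqrt (s * (1-s)))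
              = Real.pi^2 * (Real.sqrt (t*(1-t)) * Real.sqrt (s*(1-s))) := by ring
            _ ≤ Real.pi^2 * (Real.sqrt t * Real.sqrt (1-s)) := by
                apply mul_le_mul_of_nonneg_left h2 hπ2.le
            _ ≤ Real.pi^2 * ((t+1-s)/2) := mul_le_mul_of_nonneg_left hprod hπ2.le
        calc (t * s + (1 - t) * (1 - s)) *
            ((Real.pi * Real.sqrt (t * (1-t))) * (Real.pi * Real.sqrt (s * (1-s))))
            ≤ (t+1-s) * (Real.pi^2 * ((t+1-s)/2)) := by
              apply mul_le_mul hDle hw (by positivity) (by linarith)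
          _ = Real.pi^2 * (t+1-s)^2 / 2 := by ring
      have hFeq : F t s = 1 / ((t * s + (1 - t) * (1 - s)) *
          ((Real.pi * Real.sqrt (t * (1-t))) * (Real.pi * Real.sqrt (s * (1-s))))) := by
        simp only [hF]
        rw [div_mul_div_comm, div_mul_div_comm]
        ring_nf
      have hD'pos : 0 < (t * s + (1 - t) * (1 - s)) *
          ((Real.pi * Real.sqrt (t * (1-t))) * (Real.pi * Real.sqrt (s * (1-s)))) :=
        mul_pos hDpos (mul_pos (mul_pos hπ hsqpos1) (mul_pos hπ hsqpos2))
      have hroot : 0 < Real.pi^2 * (t+1-s)^2 := mul_pos hπ2 (pow_pos hst 2)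
      rw [hFeq]
      simp only [hG]
      rw [div_le_div_iff₀ hroot hD'pos]
      linarith [key]
    have hmono : ∫ s in (1/2:ℝ)..(1-δ), G s ≤ ∫ s in (1/2:ℝ)..(1-δ), F t s :=
      intervalIntegral.integral_mono_on hle hGint hFint hpt
    -- compute ∫ G
    have hcalc : ∫ s in (1/2:ℝ)..(1-δ), G s = φ t := by
      have hderiv : ∀ s ∈ Set.uIcc (1/2:ℝ) (1-δ),
          HasDerivAt (fun s => 2/(Real.pi^2*(t+1-s))) (G s) s := by
        intro s hs
        rw [Set.uIcc_of_le hle] at hs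
        obtain ⟨hs1, hs2⟩ := hs
        have hne : Real.pi^2*(t+1-s) ≠ 0 := by
          have : 0 < t + 1 - s := by linarith
          positivity
        have hd : HasDerivAt (fun s : ℝ => Real.pi^2*(t+1-s)) (Real.pi^2 * (-1)) s :=
          (((hasDerivAt_id s).const_sub (t+1))).const_mul (Real.pi^2)
        have := (hasDerivAt_const s (2:ℝ)).div hd hne
        convert this using 1
        have h' : 0 < t + 1 - s := by linarith
        show 2/(Real.pi^2 * (t+1-s)^2) = _
        rw [div_eq_div_iff (mul_ne_zero hπ2.ne' (pow_ne_zero 2 (ne_of_gt (by linarith : (0:ℝ) < t + 1 - s)))) (pow_ne_zero 2 hne)]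
        ring
        all_goals rfl
      rw [intervalIntegral.integral_eq_sub_of_hasDerivAt hderiv hGint]
      simp only [hφ]
      have h1 : t + 1 - (1 - δ) = t + δ := by ring
      have h2 : t + 1 - (1/2 : ℝ) = t + 1/2 := by ring
      rw [h1, h2]
    linarith [hmono, hcalc.symm.le]
  -- the parametric integral of Ft is continuous
  have hΦcont : Continuous (fun t => ∫ s in (1/2:ℝ)..(1-δ), Ft t s) :=
    intervalIntegral.continuous_parametric_intervalIntegral_of_continuous' hFtcont _ _
  -- replace inner integral of F by that of Ft on the outer interval
  have houter_eq : (∫ t in δ..(1/2:ℝ), ∫ s in (1/2:ℝ)..(1-δ), F t s)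
      = ∫ t in δ..(1/2:ℝ), ∫ s in (1/2:ℝ)..(1-δ), Ft t s := by
    apply intervalIntegral.integral_congr
    intro t ht
    rw [Set.uIcc_of_le hδle] at ht
    apply intervalIntegral.integral_congr
    intro s hs
    rw [Set.uIcc_of_le hle] at hs
    exact (hFtF t ht s hs).symm
  -- outer monotonicity
  have hφcont : ContinuousOn φ (Set.uIcc δ (1/2:ℝ)) := by
    rw [Set.uIcc_of_le hδle]
    apply ContinuousOn.sub
    · apply ContinuousOn.div continuousOn_const (by fun_prop)
      intro t ht
      obtain ⟨ht1, ht2⟩ := ht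
      have h' : 0 < t + δ := by linarith
      exact ne_of_gt (mul_pos hπ2 h')
    · apply ContinuousOn.div continuousOn_const (by fun_prop)
      intro t ht
      obtain ⟨ht1, ht2⟩ := ht
      have h' : 0 < t + 1/2 := by linarith
      exact ne_of_gt (mul_pos hπ2 h')
  have hφint : IntervalIntegrable φ volume δ (1/2) := hφcont.intervalIntegrable
  have hΦint : IntervalIntegrable (fun t => ∫ s in (1/2:ℝ)..(1-δ), Ft t s) volume δ (1/2) :=
    hΦcont.intervalIntegrable δ (1/2)
  have houter : (∫ t in δ..(1/2:ℝ), φ t)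
      ≤ ∫ t in δ..(1/2:ℝ), ∫ s in (1/2:ℝ)..(1-δ), Ft t s := by
    apply intervalIntegral.integral_mono_on hδle hφint hΦint
    intro t ht
    have heq : (∫ s in (1/2:ℝ)..(1-δ), Ft t s) = ∫ s in (1/2:ℝ)..(1-δ), F t s := by
      apply intervalIntegral.integral_congr
      intro s hs
      rw [Set.uIcc_of_le hle] at hs
      exact hFtF t ht s hs
    rw [heq]
    exact hinner t ht
  -- compute ∫ φ
  have hcalcφ : (∫ t in δ..(1/2:ℝ), φ t)
      = 2/Real.pi^2 * (2 * Real.log (1/2 + δ) - Real.log (2*δ)) := by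
    have hderiv : ∀ t ∈ Set.uIcc δ (1/2:ℝ),
        HasDerivAt (fun t => 2/Real.pi^2 * (Real.log (t+δ) - Real.log (t+1/2))) (φ t) t := by
      intro t ht
      rw [Set.uIcc_of_le hδle] at ht
      obtain ⟨ht1, ht2⟩ := ht
      have h1 : (0:ℝ) < t + δ := by linarith
      have h2 : (0:ℝ) < t + 1/2 := by linarith
      have hd1 : HasDerivAt (fun t : ℝ => Real.log (t+δ)) (1/(t+δ)) t := by
        have := ((hasDerivAt_id t).add_const δ).log h1.ne'
        simpa using this
      have hd2 : HasDerivAt (fun t : ℝ => Real.log (t+1/2)) (1/(t+1/2)) t := by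
        have := ((hasDerivAt_id t).add_const (1/2:ℝ)).log h2.ne'
        simpa using this
      have := ((hd1.sub hd2)).const_mul (2/Real.pi^2)
      convert this using 1
      show 2/(Real.pi^2*(t+δ)) - 2/(Real.pi^2*(t+1/2)) = _
      rw [mul_sub, div_mul_div_comm, div_mul_div_comm, mul_one]
      all_goals rfl
    rw [intervalIntegral.integral_eq_sub_of_hasDerivAt hderiv hφint]
    have e1 : (1/2 : ℝ) + δ = 1/2 + δ := rfl
    have e2 : (1/2 : ℝ) + 1/2 = 1 := by norm_num
    have e3 : δ + δ = 2*δ := by ring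
    have e4 : δ + (1/2:ℝ) = 1/2 + δ := by ring
    rw [e2, e3, e4, Real.log_one]
    ring
  -- final elementary inequality
  have hfinal : (1 / Real.pi ^ 2) * Real.log (1/(8*δ))
      ≤ 2/Real.pi^2 * (2 * Real.log (1/2 + δ) - Real.log (2*δ)) := by
    have hkey : Real.log (1/(8*δ)) ≤ 4 * Real.log (1/2 + δ) - 2 * Real.log (2*δ) := by
      have hrhs : 4 * Real.log (1/2 + δ) - 2 * Real.log (2*δ)
          = Real.log ((1/2+δ)^4 / (2*δ)^2) := by
        rw [Real.log_div (by positivity) (by positivity), Real.log_pow, Real.log_pow]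
        push_cast
        ring
      rw [hrhs]
      apply Real.log_le_log (by positivity)
      rw [div_le_div_iff₀ (by positivity) (by positivity)]
      have h16 : (1/16:ℝ) ≤ (1/2+δ)^4 := by nlinarith [pow_pos h0 2, pow_pos h0 3, pow_pos h0 4]
      nlinarith [mul_le_mul_of_nonneg_left h16 (by linarith : (0:ℝ) ≤ 8*δ)]
    calc (1 / Real.pi ^ 2) * Real.log (1/(8*δ))
        ≤ (1 / Real.pi ^ 2) * (4 * Real.log (1/2 + δ) - 2 * Real.log (2*δ)) := by
          apply mul_le_mul_of_nonneg_left hkey (by positivity)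
      _ = 2/Real.pi^2 * (2 * Real.log (1/2 + δ) - Real.log (2*δ)) := by ring
  calc (1 / Real.pi ^ 2) * Real.log (1/(8*δ))
      ≤ 2/Real.pi^2 * (2 * Real.log (1/2 + δ) - Real.log (2*δ)) := hfinal
    _ = ∫ t in δ..(1/2:ℝ), φ t := hcalcφ.symm
    _ ≤ ∫ t in δ..(1/2:ℝ), ∫ s in (1/2:ℝ)..(1-δ), Ft t s := houter
    _ = ∫ t in δ..(1/2:ℝ), ∫ s in (1/2:ℝ)..(1-δ), F t s := houter_eq.symm
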